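/- arXiv:cond-mat/9904230 — 3 statements merged into one kernel-verified Lean document; each statement's English description precedes it below -/
import Mathlib

section
/- The one-sided Thue-Morse sequence is not eventually periodic: there is no p > 0 and N such that t(n + p) = t(n) for all n ≥ N. -/
open Fin.NatCast in
/-- The Thue-Morse sequence: parity of the number of 1's in the binary expansion. -/
def thueMorse (n : ℕ) : Fin 2 := (((Nat.digits 2 n).count 1 : ℕ) : Fin 2)

lemma tm_even (n : ℕ) : thueMorse (2 * n) = thueMorse n := by
  rcases Nat.eq_zero_or_pos n with rfl | hn
  · rfl
  · unfold thueMorse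
    rw [Nat.digits_def' (by norm_num : 1 < 2) (by omega)]
    have h1 : 2 * n % 2 = 0 := by omega
    have h2 : 2 * n / 2 = n := by omega
    rw [h1, h2, List.count_cons]
    simp

lemma tm_odd (n : ℕ) : thueMorse (2 * n + 1) = thueMorse n + 1 := by
  unfold thueMorse
  rw [Nat.digits_def' (by norm_num : 1 < 2) (by omega)]
  have h1 : (2 * n + 1) % 2 = 1 := by omega
  have h2 : (2 * n + 1) / 2 = n := by omega
  rw [h1, h2, List.count_cons]
  simp
  apply Fin.ext; simp [Fin.val_add, Fin.val_natCast]

lemma tm_aux : ∀ p, 0 < p → ¬ ∃ N : ℕ, ∀ n ≥ N, thueMorse (n + p) = thueMorse n := by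
  intro p
  induction p using Nat.strong_induction_on with
  | _ p ih =>
    rintro hp ⟨N, h⟩
    rcases Nat.even_or_odd p with ⟨q, hq⟩ | ⟨r, hr⟩
    · -- even case: half the period also works
      have hq0 : 0 < q := by omega
      refine ih q (by omega) hq0 ⟨N, fun n hn => ?_⟩
      have h2 : thueMorse (2 * n + p) = thueMorse (2 * n) := h (2 * n) (by omega)
      have e : 2 * n + p = 2 * (n + q) := by omega
      rw [e, tm_even, tm_even] at h2
      exact h2
    · -- odd case: p = 2r + 1
      have key1 : ∀ n ≥ N, thueMorse (n + r) + 1 = thueMorse n := by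
        intro n hn
        have h2 : thueMorse (2 * n + p) = thueMorse (2 * n) := h (2 * n) (by omega)
        have e : 2 * n + p = 2 * (n + r) + 1 := by omega
        rw [e, tm_odd, tm_even] at h2
        exact h2
      have key2 : ∀ n ≥ N, thueMorse (n + r + 1) = thueMorse n + 1 := by
        intro n hn
        have h2 : thueMorse (2 * n + 1 + p) = thueMorse (2 * n + 1) := h (2 * n + 1) (by omega)
        have e : 2 * n + 1 + p = 2 * (n + r + 1) := by omega
        rw [e, tm_even, tm_odd] at h2
        exact h2
      have addadd : ∀ a : Fin 2, a + 1 + 1 = a := by decide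
      have const : ∀ n ≥ N, thueMorse (n + r + 1) = thueMorse (n + r) := by
        intro n hn
        rw [key2 n hn, ← key1 n hn, addadd]
      have allk : ∀ k, thueMorse (N + r + k) = thueMorse (N + r) := by
        intro k
        induction k with
        | zero => rfl
        | succ k ihk =>
          have hc := const (N + k) (by omega)
          have e1 : N + k + r + 1 = N + r + (k + 1) := by omega
          have e2 : N + k + r = N + r + k := by omega
          rw [e1, e2] at hc
          rw [hc, ihk]
      have h1 := key1 (N + r) (by omega)
      rw [allk r] at h1
      have hne : ∀ a : Fin 2, ¬ (a + 1 = a) := by decide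
      exact hne _ h1

theorem thueMorse_not_eventually_periodic :
    ¬ ∃ p : ℕ, 0 < p ∧ ∃ N : ℕ, ∀ n ≥ N, thueMorse (n + p) = thueMorse n := by
  rintro ⟨p, hp, hN⟩
  exact tm_aux p hp hN
end

section
/- The Thue-Morse sequence contains no three consecutive identical symbols: there is no n with t(n) = t(n+1) = t(n+2). -/
open Fin.NatCast in
lemma thueMorse_ne (k : ℕ) : thueMorse (2 * k) ≠ thueMorse (2 * k + 1) := by
  unfold thueMorse
  have h1 : Nat.digits 2 (2 * k + 1) = 1 :: Nat.digits 2 k := by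
    rw [Nat.digits_def' (by norm_num : 1 < 2) (by omega)]
    congr 1
    · omega
    · congr 1; omega
  rcases Nat.eq_zero_or_pos k with hk | hk
  · subst hk; simp
  · have h0 : Nat.digits 2 (2 * k) = 0 :: Nat.digits 2 k := by
      rw [Nat.digits_def' (by norm_num : 1 < 2) (by omega)]
      congr 1
      · omega
      · congr 1; omega
    rw [h0, h1]
    simp only [List.count_cons]
    intro h
    have : ((((Nat.digits 2 k).count 1 : ℕ) : Fin 2)) =
        (((Nat.digits 2 k).count 1 + 1 : ℕ) : Fin 2) := by
      simpa using h
    rw [Nat.cast_add, Nat.cast_one] at this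
    have : (0 : Fin 2) = 1 := by
      generalize (((Nat.digits 2 k).count 1 : ℕ) : Fin 2) = x at this
      omega
    exact absurd this (by decide)

theorem thueMorse_no_cube :
    ¬ ∃ n : ℕ, thueMorse n = thueMorse (n + 1) ∧ thueMorse (n + 1) = thueMorse (n + 2) := by
  rintro ⟨n, h1, h2⟩
  rcases Nat.even_or_odd n with ⟨k, hk⟩ | ⟨k, hk⟩
  · exact thueMorse_ne k (by rw [← two_mul] at hk; rw [← hk]; exact h1)
  · refine thueMorse_ne (k + 1) ?_
    have e1 : 2 * (k + 1) = n + 1 := by omega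
    have e2 : 2 * (k + 1) + 1 = n + 2 := by omega
    rw [e1]; exact h2
end

section
/- Every integer n ∈ ℤ can be written as Σ_{k ∈ A} (−1)^{k+1} 2^k for a unique finite subset A ⊆ ℕ. -/
namespace AltBase

def f (A : Finset ℕ) : ℤ := ∑ k ∈ A, (-2) ^ k

def strip (A : Finset ℕ) : Finset ℕ := (A.erase 0).image (· - 1)

lemma strip_image_succ (A : Finset ℕ) : (strip A).image Nat.succ = A.erase 0 := by
  ext x
  simp only [strip, Finset.mem_image, Finset.mem_erase]
  constructor
  · rintro ⟨y, ⟨z, ⟨hz0, hzA⟩, rfl⟩, rfl⟩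
    have : (z - 1).succ = z := by omega
    rw [this]
    exact ⟨hz0, hzA⟩
  · rintro ⟨hx0, hxA⟩
    exact ⟨x - 1, ⟨x, ⟨hx0, hxA⟩, rfl⟩, by omega⟩

lemma f_image_succ (B : Finset ℕ) : f (B.image Nat.succ) = -2 * f B := by
  rw [f, Finset.sum_image (fun x _ y _ h => Nat.succ_injective h)]
  simp only [Nat.succ_eq_add_one, pow_succ]
  rw [← Finset.sum_mul, f]
  ring

lemma decomp (A : Finset ℕ) :
    f A = (if 0 ∈ A then 1 else 0) + (-2) * f (strip A) := by
  rw [← f_image_succ, strip_image_succ]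
  by_cases h : 0 ∈ A
  · rw [if_pos h]
    conv_lhs => rw [← Finset.insert_erase h]
    rw [f, Finset.sum_insert (Finset.notMem_erase _ _)]
    simp [f]
  · rw [if_neg h, Finset.erase_eq_of_notMem h, zero_add]

def w (A : Finset ℕ) : ℕ := ∑ k ∈ A, (k + 1)

lemma w_strip_eq (A : Finset ℕ) : w (strip A) = ∑ k ∈ A.erase 0, k := by
  rw [w, strip, Finset.sum_image]
  · apply Finset.sum_congr rfl
    intro k hk
    have := (Finset.mem_erase.1 hk).1
    omega
  · intro x hx y hy h
    have hx' := (Finset.mem_erase.1 hx).1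
    have hy' := (Finset.mem_erase.1 hy).1
    simp only at h
    omega

lemma w_eq (A : Finset ℕ) : w A = (∑ k ∈ A, k) + A.card := by
  rw [w, Finset.sum_add_distrib, Finset.sum_const, smul_eq_mul, mul_one]

lemma w_strip_le (A : Finset ℕ) : w (strip A) ≤ w A := by
  rw [w_strip_eq, w_eq]
  have h1 : (∑ k ∈ A.erase 0, k) ≤ ∑ k ∈ A, k :=
    Finset.sum_le_sum_of_subset (Finset.erase_subset _ _)
  omega

lemma w_strip_lt (A : Finset ℕ) (h : A.Nonempty) : w (strip A) < w A := by
  rw [w_strip_eq, w_eq]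
  have h1 : (∑ k ∈ A.erase 0, k) ≤ ∑ k ∈ A, k :=
    Finset.sum_le_sum_of_subset (Finset.erase_subset _ _)
  have h2 : 0 < A.card := Finset.card_pos.2 h
  omega

lemma w_pos (A : Finset ℕ) (h : A.Nonempty) : 0 < w A := by
  rw [w_eq]
  have := Finset.card_pos.2 h
  omega

lemma eq_of_strip (A B : Finset ℕ) (h0 : (0 ∈ A) ↔ (0 ∈ B))
    (h : strip A = strip B) : A = B := by
  have hA := strip_image_succ A
  have hB := strip_image_succ B
  rw [h] at hA
  have he : A.erase 0 = B.erase 0 := hA.symm.trans hB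
  ext x
  by_cases hx : x = 0
  · subst hx; exact h0
  · have := Finset.ext_iff.1 he x
    simp only [Finset.mem_erase] at this
    constructor
    · intro hxA; exact (this.1 ⟨hx, hxA⟩).2
    · intro hxB; exact (this.2 ⟨hx, hxB⟩).2

lemma f_inj : ∀ N, ∀ A B : Finset ℕ, w A + w B ≤ N → f A = f B → A = B := by
  intro N
  induction N with
  | zero =>
    intro A B hle _
    have hA : A = ∅ := by
      by_contra h
      have := w_pos A (Finset.nonempty_iff_ne_empty.2 h)
      omega
    have hB : B = ∅ := by
      by_contra h
      have := w_pos B (Finset.nonempty_iff_ne_empty.2 h)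
      omega
    rw [hA, hB]
  | succ N ih =>
    intro A B hle h
    by_cases hAB : A = ∅ ∧ B = ∅
    · rw [hAB.1, hAB.2]
    · have hne : A.Nonempty ∨ B.Nonempty := by
        rcases not_and_or.1 hAB with h' | h'
        · exact Or.inl (Finset.nonempty_iff_ne_empty.2 h')
        · exact Or.inr (Finset.nonempty_iff_ne_empty.2 h')
      have key : (if 0 ∈ A then (1:ℤ) else 0) + (-2) * f (strip A)
          = (if 0 ∈ B then 1 else 0) + (-2) * f (strip B) := by
        rw [← decomp, ← decomp, h]
      have h0 : (0 ∈ A) ↔ (0 ∈ B) := by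
        by_cases h0A : 0 ∈ A <;> by_cases h0B : 0 ∈ B <;>
          simp only [h0A, h0B, if_true, if_false, if_pos, if_neg, not_false_iff] at key ⊢ <;>
          first
            | tauto
            | (exfalso; omega)
      have hf : f (strip A) = f (strip B) := by
        by_cases h0A : 0 ∈ A
        · rw [if_pos h0A, if_pos (h0.1 h0A)] at key; omega
        · rw [if_neg h0A, if_neg (fun hb => h0A (h0.2 hb))] at key; omega
      have hlt : w (strip A) + w (strip B) ≤ N := by
        have hA' := w_strip_le A
        have hB' := w_strip_le B
        rcases hne with h' | h'
        · have := w_strip_lt A h'; omega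
        · have := w_strip_lt B h'; omega
      exact eq_of_strip A B h0 (ih _ _ hlt hf)

lemma f_surj : ∀ N, ∀ n : ℤ,
    2 * n.natAbs + (if n < 0 then 1 else 0) ≤ N → ∃ A, f A = n := by
  intro N
  induction N with
  | zero =>
    intro n hle
    have : n = 0 := by split_ifs at hle <;> omega
    exact ⟨∅, by simp [f, this]⟩
  | succ N ih =>
    intro n hle
    rcases eq_or_ne n 0 with rfl | hn
    · exact ⟨∅, by simp [f]⟩
    · have key : 2 * (-(n/2)).natAbs + (if -(n/2) < 0 then 1 else 0) ≤ N := by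
        split_ifs at hle ⊢ <;> omega
      obtain ⟨B, hB⟩ := ih _ key
      have hs : f (B.image Nat.succ) = -2 * f B := f_image_succ B
      by_cases hpar : n % 2 = 1
      · refine ⟨insert 0 (B.image Nat.succ), ?_⟩
        rw [f, Finset.sum_insert (by simp)]
        rw [show (∑ k ∈ B.image Nat.succ, (-2:ℤ)^k) = -2 * f B from hs, hB]
        simp only [pow_zero]
        omega
      · refine ⟨B.image Nat.succ, ?_⟩
        rw [f] at hs ⊢
        rw [hs, hB]
        omega

end AltBase

/-- Every integer has a unique representation as a sum of distinct terms
(−1)^{k+1} 2^k, i.e. of distinct elements of {−1, 2, −4, 8, −16, ...}. -/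
theorem alternating_base_representation :
    ∀ n : ℤ, ∃! A : Finset ℕ, n = ∑ k ∈ A, (-1 : ℤ) ^ (k + 1) * 2 ^ k := by
  have hterm : ∀ k : ℕ, (-1 : ℤ) ^ (k + 1) * 2 ^ k = -((-2) ^ k) := by
    intro k
    rw [show ((-2 : ℤ)) = -1 * 2 from by norm_num, mul_pow, pow_succ]
    ring
  have hsum : ∀ A : Finset ℕ, (∑ k ∈ A, (-1 : ℤ) ^ (k + 1) * 2 ^ k) = -AltBase.f A := by
    intro A
    rw [AltBase.f, ← Finset.sum_neg_distrib]
    exact Finset.sum_congr rfl fun k _ => hterm k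
  intro n
  obtain ⟨A, hA⟩ := AltBase.f_surj _ (-n) le_rfl
  refine ⟨A, ?_, ?_⟩
  · show n = ∑ k ∈ A, (-1 : ℤ) ^ (k + 1) * 2 ^ k
    rw [hsum A, hA, neg_neg]
  · intro B hB
    apply AltBase.f_inj (AltBase.w B + AltBase.w A) B A le_rfl
    have h1 : AltBase.f B = -n := by
      have := hB
      rw [hsum B] at this
      omega
    rw [h1, hA]
end
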